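/- arXiv:2105.12800 — 5 statements merged into one kernel-verified Lean document; each statement's English description precedes it below -/
import Mathlib

section
/- Let 0 < s < 1/2, θ ∈ (0,1), A₁ < A₂ real numbers, and ψ(x) = 1 for x ≤ A₁, ψ(x) = 1 − (1−θ)(x−A₁)/(A₂−A₁) for A₁ < x ≤ A₂, ψ(x) = θ for x > A₂. Then (−∂_{xx})^s ψ(A₂) = −c_s(1−θ)·(1/(2s) + 1/(1−2s))·(A₂−A₁)^{−2s}, where (−∂_{xx})^s u(x) = c_s · p.v. ∫_ℝ (u(x)−u(y))/|x−y|^{1+2s} dy. -/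
open Set MeasureTheory

private lemma aux_fun_eq (c : ℝ) :
    (fun y : ℝ => c - y) = (fun x : ℝ => x + c) ∘ (fun y : ℝ => -y) := by
  funext y; simp [sub_eq_neg_add, add_comm]

private lemma aux_embed (c : ℝ) : MeasurableEmbedding (fun y : ℝ => c - y) := by
  rw [aux_fun_eq]
  exact ((Homeomorph.addRight c).isClosedEmbedding.measurableEmbedding).comp
    measurableEmbedding_neg

private lemma aux_map (c : ℝ) :
    Measure.map (fun y : ℝ => c - y) (volume : Measure ℝ) = volume := by
  rw [aux_fun_eq, ← Measure.map_map (measurable_add_const c) measurable_neg,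
    Measure.map_neg_eq_self, map_add_right_eq_self]

private lemma aux_pre (c a : ℝ) : (fun y : ℝ => c - y) ⁻¹' Ici (c - a) = Iic a := by
  ext y; simp [sub_le_sub_iff_left]

private lemma aux_int (f : ℝ → ℝ) (c a : ℝ) :
    ∫ y in Iic a, f (c - y) = ∫ t in Ioi (c - a), f t := by
  have h := (aux_embed c).setIntegral_map (μ := volume) f (Ici (c - a))
  rw [aux_map, aux_pre] at h
  rw [← h, integral_Ici_eq_integral_Ioi]

private lemma aux_intOn (f : ℝ → ℝ) (c a : ℝ) (h : IntegrableOn f (Ioi (c - a))) :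
    IntegrableOn (fun y => f (c - y)) (Iic a) := by
  rw [← integrableOn_Ici_iff_integrableOn_Ioi] at h
  rw [IntegrableOn, ← aux_map c, (aux_embed c).restrict_map,
    (aux_embed c).integrable_map_iff, aux_pre] at h
  exact h

theorem stmt4 (s cs θ A₁ A₂ : ℝ) (hs : 0 < s) (hs2 : s < 1/2)
    (hθ : θ ∈ Set.Ioo (0:ℝ) 1) (hA : A₁ < A₂) (hc : 0 < cs)
    (ψ : ℝ → ℝ)
    (hψ1 : ∀ x ≤ A₁, ψ x = 1)
    (hψ2 : ∀ x, A₁ < x → x ≤ A₂ → ψ x = 1 - (1-θ)*(x-A₁)/(A₂-A₁))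
    (hψ3 : ∀ x, A₂ < x → ψ x = θ) :
    cs * ∫ y : ℝ, (ψ A₂ - ψ y) / |A₂ - y| ^ (1+2*s) =
      -cs * (1-θ) * (1/(2*s) + 1/(1-2*s)) * (A₂-A₁) ^ (-(2*s)) := by
  have hD : (0:ℝ) < A₂ - A₁ := sub_pos.mpr hA
  have hs1 : (0:ℝ) < 1 - 2*s := by linarith
  have hψA2 : ψ A₂ = θ := by
    rw [hψ2 A₂ hA le_rfl]; field_simp; ring
  set F : ℝ → ℝ := fun y => (ψ A₂ - ψ y) / |A₂ - y| ^ (1+2*s) with hF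
  have e1 : ∀ y ∈ Iic A₁, F y = (θ - 1) * (A₂ - y) ^ (-(1+2*s)) := by
    intro y hy
    have hy' : y ≤ A₁ := hy
    have hpos : 0 < A₂ - y := by linarith
    simp only [hF, hψ1 y hy', hψA2, abs_of_pos hpos, Real.rpow_neg hpos.le,
      div_eq_mul_inv]
  have e2 : ∀ y ∈ Ioc A₁ A₂, F y = (θ - 1)/(A₂-A₁) * (A₂ - y) ^ (-(2*s)) := by
    intro y hy
    obtain ⟨hy1, hy2⟩ := hy
    rcases eq_or_lt_of_le hy2 with h | h
    · simp [hF, h, Real.zero_rpow (by positivity : (1+2*s) ≠ 0),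
        Real.zero_rpow (by nlinarith : -(2*s) ≠ 0)]
    · have hpos : 0 < A₂ - y := sub_pos.mpr h
      have hnum : ψ A₂ - ψ y = (θ - 1) * (A₂ - y)/(A₂-A₁) := by
        rw [hψA2, hψ2 y hy1 hy2]; field_simp; ring
      have hrp : (A₂ - y) ^ (-(2*s)) = (A₂ - y) ^ (1:ℝ) / (A₂ - y) ^ (1+2*s) := by
        rw [← Real.rpow_sub hpos]; norm_num
      have hne : (A₂ - y) ^ (1+2*s) ≠ 0 := (Real.rpow_pos_of_pos hpos _).ne'
      simp only [hF, hnum, abs_of_pos hpos, hrp, Real.rpow_one]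
      field_simp
  have e3 : ∀ y ∈ Ioi A₂, F y = 0 := by
    intro y hy
    simp [hF, hψ3 y hy, hψA2]
  have int1 : IntegrableOn F (Iic A₁) := by
    have base : IntegrableOn (fun t : ℝ => t ^ (-(1+2*s))) (Ioi (A₂ - A₁)) :=
      integrableOn_Ioi_rpow_of_lt (by linarith) hD
    have h1 := (aux_intOn (fun t : ℝ => t ^ (-(1+2*s))) A₂ A₁ base).const_mul (θ - 1)
    exact MeasureTheory.IntegrableOn.congr_fun h1 (fun y hy => (e1 y hy).symm)
      measurableSet_Iic
  have int2 : IntegrableOn F (Ioc A₁ A₂) := by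
    have base : IntervalIntegrable (fun t : ℝ => t ^ (-(2*s))) volume 0 (A₂ - A₁) :=
      intervalIntegral.intervalIntegrable_rpow' (by linarith)
    have h2 := (base.comp_sub_left A₂).symm
    simp only [sub_zero, sub_sub_cancel] at h2
    have h3 : IntervalIntegrable
        (fun y => (θ - 1)/(A₂-A₁) * (A₂ - y) ^ (-(2*s))) volume A₁ A₂ :=
      h2.const_mul _
    have h4 := (intervalIntegrable_iff_integrableOn_Ioc_of_le hA.le).mp h3
    exact h4.congr_fun (fun y hy => (e2 y hy).symm) measurableSet_Ioc
  have int3 : IntegrableOn F (Ioi A₂) :=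
    (integrableOn_zero).congr_fun (fun y hy => (e3 y hy).symm) measurableSet_Ioi
  have hu : Ioc A₁ A₂ ∪ Ioi A₂ = Ioi A₁ := Ioc_union_Ioi_eq_Ioi hA.le
  have int23 : IntegrableOn F (Ioi A₁) := by rw [← hu]; exact int2.union int3
  have hsplit : ∫ y : ℝ, F y =
      (∫ y in Iic A₁, F y) + ((∫ y in Ioc A₁ A₂, F y) + ∫ y in Ioi A₂, F y) := by
    rw [← intervalIntegral.integral_Iic_add_Ioi int1 int23, ← hu,
      setIntegral_union Ioc_disjoint_Ioi_same measurableSet_Ioi int2 int3]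
  have v3 : ∫ y in Ioi A₂, F y = 0 := by
    rw [setIntegral_congr_fun measurableSet_Ioi e3]; simp
  have v1 : ∫ y in Iic A₁, F y = (θ - 1) * ((A₂ - A₁) ^ (-(2*s)) / (2*s)) := by
    rw [setIntegral_congr_fun measurableSet_Iic e1, MeasureTheory.integral_const_mul,
      aux_int (fun t : ℝ => t ^ (-(1+2*s))) A₂ A₁,
      integral_Ioi_rpow_of_lt (by linarith) hD,
      show -(1+2*s) + 1 = -(2*s) by ring]
    rw [neg_div_neg_eq]
  have v2 : ∫ y in Ioc A₁ A₂, F y =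
      (θ - 1)/(A₂-A₁) * ((A₂ - A₁) ^ (1 - 2*s) / (1 - 2*s)) := by
    rw [setIntegral_congr_fun measurableSet_Ioc e2,
      ← intervalIntegral.integral_of_le hA.le,
      intervalIntegral.integral_const_mul,
      intervalIntegral.integral_comp_sub_left (fun t : ℝ => t ^ (-(2*s))) A₂,
      sub_self,
      integral_rpow (Or.inl (by linarith)),
      Real.zero_rpow (ne_of_gt (by linarith) : -(2*s) + 1 ≠ 0),
      show -(2*s) + 1 = 1 - 2*s by ring]
    norm_num
  rw [hsplit, v1, v2, v3,
    show (1:ℝ) - 2*s = 1 + -(2*s) by ring, Real.rpow_add hD, Real.rpow_one]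
  have h2s : (2*s) ≠ 0 := by positivity
  have h12s : (1 - 2*s) ≠ 0 := hs1.ne'
  have hDne : A₂ - A₁ ≠ 0 := sub_ne_zero.mpr hA.ne'
  revert hDne
  generalize A₂ - A₁ = D
  intro hDne
  have hone : (θ - 1) / D * (D * D ^ (-(2*s)) / (1 + -(2*s))) =
      (θ - 1) * (D ^ (-(2*s)) / (1 + -(2*s))) := by
    rw [mul_div_assoc, ← mul_assoc, div_mul_cancel₀ _ hDne]
  rw [hone]
  field_simp
  ring
end

section
/- Let 0 < s < 1/2, θ ∈ (0,1), A₁ < A₂, and let ψ be the piecewise linear function equal to 1 on (−∞,A₁], linearly decreasing to θ on [A₁,A₂], and equal to θ on [A₂,∞). If φ: ℝ → ℝ satisfies φ ≤ ψ everywhere and φ(x) = ψ(x) at some point x, then (−∂_{xx})^s φ(x) ≥ −C_s (1−θ)(A₂−A₁)^{−2s}, where C_s := max{c_s/(2s(1−2s)), 1}. -/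
open MeasureTheory Set Real

theorem stmt5 (s cs θ A₁ A₂ : ℝ) (hs : 0 < s) (hs2 : s < 1/2)
    (hθ : θ ∈ Set.Ioo (0:ℝ) 1) (hA : A₁ < A₂) (hc : 0 < cs)
    (ψ : ℝ → ℝ)
    (hψ1 : ∀ x ≤ A₁, ψ x = 1)
    (hψ2 : ∀ x, A₁ < x → x ≤ A₂ → ψ x = 1 - (1-θ)*(x-A₁)/(A₂-A₁))
    (hψ3 : ∀ x, A₂ < x → ψ x = θ)
    (φ : ℝ → ℝ) (M L : ℝ)
    (hbdd : ∀ x, |φ x| ≤ M) (hLip : ∀ x y, |φ x - φ y| ≤ L * |x - y|)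
    (hle : ∀ y, φ y ≤ ψ y) (x : ℝ) (htouch : φ x = ψ x) :
    -(max (cs/(2*s*(1-2*s))) 1) * (1-θ) * (A₂-A₁) ^ (-(2*s)) ≤
      cs * ∫ y : ℝ, (φ x - φ y) / |x - y| ^ (1+2*s) := by
  obtain ⟨hθ0, hθ1⟩ := hθ
  have hd0 : (0:ℝ) < A₂ - A₁ := by linarith
  have hs1 : 2*s < 1 := by linarith
  have h1θ : (0:ℝ) ≤ 1 - θ := by linarith
  have hM : 0 ≤ M := le_trans (abs_nonneg _) (hbdd 0)
  have hL : 0 ≤ L := by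
    have h := hLip 0 1
    have h2 := abs_nonneg (φ 0 - φ 1)
    simp only [zero_sub, abs_neg, abs_one, mul_one] at h
    linarith
  set d := A₂ - A₁ with hdd
  -- ψ in closed form
  have hψval : ∀ y, ψ y = 1 - (1-θ) * (min (max y A₁) A₂ - A₁) / d := by
    intro y
    rcases le_or_gt y A₁ with h1 | h1
    · rw [hψ1 y h1, max_eq_right h1, min_eq_left hA.le]
      simp
    · rcases le_or_gt y A₂ with h2 | h2
      · rw [hψ2 y h1 h2, max_eq_left h1.le, min_eq_left h2]
      · rw [hψ3 y h2, max_eq_left (hA.trans h2).le, min_eq_right h2.le]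
        rw [hdd]
        rw [mul_div_assoc, div_self (sub_ne_zero.2 hA.ne')]; ring
  have clamp_mono : ∀ a b : ℝ, a ≤ b → min (max a A₁) A₂ ≤ min (max b A₁) A₂ :=
    fun a b hab => min_le_min (max_le_max hab le_rfl) le_rfl
  have clamp_lip : ∀ a b : ℝ, a ≤ b → min (max b A₁) A₂ - min (max a A₁) A₂ ≤ b - a := by
    intro a b hab
    simp only [min_def, max_def]
    split_ifs <;> linarith
  have clamp_bdd : ∀ a b : ℝ, min (max b A₁) A₂ - min (max a A₁) A₂ ≤ d := by
    intro a b
    have h1 : min (max b A₁) A₂ ≤ A₂ := min_le_right _ _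
    have h2 : A₁ ≤ min (max a A₁) A₂ := le_min (le_max_right _ _) hA.le
    rw [hdd]; linarith
  -- ψ is nonincreasing
  have hmono : ∀ a b : ℝ, a ≤ b → ψ b ≤ ψ a := by
    intro a b hab
    rw [hψval a, hψval b]
    have h := clamp_mono a b hab
    have e : (1-θ)*(min (max b A₁) A₂ - A₁)/d - (1-θ)*(min (max a A₁) A₂ - A₁)/d
        = (1-θ)*(min (max b A₁) A₂ - min (max a A₁) A₂)/d := by ring
    have h0 : 0 ≤ (1-θ)*(min (max b A₁) A₂ - min (max a A₁) A₂)/d :=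
      div_nonneg (mul_nonneg h1θ (by linarith)) hd0.le
    linarith
  -- key one-sided estimate
  have hkey : ∀ y, y ≤ x → ψ y - ψ x ≤ (1-θ) * min 1 ((x-y)/d) := by
    intro y hy
    rw [hψval y, hψval x]
    have h1 := clamp_lip y x hy
    have h2 := clamp_bdd y x
    have e : (1 - (1-θ)*(min (max y A₁) A₂ - A₁)/d) - (1 - (1-θ)*(min (max x A₁) A₂ - A₁)/d)
        = (1-θ)*((min (max x A₁) A₂ - min (max y A₁) A₂)/d) := by ring
    rw [e, mul_min_of_nonneg _ _ h1θ, le_min_iff]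
    constructor
    · have hΔ : (min (max x A₁) A₂ - min (max y A₁) A₂)/d ≤ 1 := (div_le_one hd0).2 h2
      nlinarith [mul_le_mul_of_nonneg_left hΔ h1θ]
    · have hΔ : (min (max x A₁) A₂ - min (max y A₁) A₂)/d ≤ (x-y)/d := by gcongr
      exact mul_le_mul_of_nonneg_left hΔ h1θ
  -- lower bound function
  set H : ℝ → ℝ := fun k => -((1-θ) * min 1 (k/d) * k ^ (-(1+2*s))) with hH
  set G : ℝ → ℝ := fun k => (Set.Ioi (0:ℝ)).indicator H k with hG
  set f : ℝ → ℝ := fun y => (φ x - φ y) / |x - y| ^ (1+2*s) with hf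
  -- pointwise comparison
  have hφψ : ∀ y, ψ x - ψ y ≤ φ x - φ y := by
    intro y; have := hle y; rw [htouch]; linarith
  have hfg : ∀ y, G (x - y) ≤ f y := by
    intro y
    rcases lt_or_ge y x with hy | hy
    · have hk : 0 < x - y := by linarith
      have hp : (0:ℝ) < (x - y) ^ (1+2*s) := rpow_pos_of_pos hk _
      have hGv : G (x - y) = -((1-θ) * min 1 ((x-y)/d)) / (x-y) ^ (1+2*s) := by
        simp only [hG, hH]
        rw [indicator_of_mem (mem_Ioi.2 hk)]
        rw [Real.rpow_neg hk.le, div_eq_mul_inv]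
        ring
      have hfv : f y = (φ x - φ y) / (x - y) ^ (1+2*s) := by
        simp only [hf]
        rw [abs_of_pos hk]
      rw [hGv, hfv]
      have hnum : -((1-θ) * min 1 ((x-y)/d)) ≤ φ x - φ y := by
        have h3 := hkey y hy.le
        have h4 := hφψ y
        linarith
      gcongr
    · have hk : x - y ≤ 0 := by linarith
      have hGv : G (x - y) = 0 := by
        simp only [hG]
        exact indicator_of_notMem (by simp only [mem_Ioi, not_lt]; linarith) _
      rw [hGv]
      simp only [hf]
      apply div_nonneg ?_ (Real.rpow_nonneg (abs_nonneg _) _)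
      have h5 := hmono x y hy
      have h6 := hφψ y
      linarith
  -- measurability of f
  have hφc : Continuous φ := by
    have : LipschitzWith (Real.toNNReal L) φ := by
      apply LipschitzWith.of_dist_le_mul
      intro a b
      rw [Real.dist_eq, Real.dist_eq, Real.coe_toNNReal L hL]
      exact hLip a b
    exact this.continuous
  have hfmeas : AEStronglyMeasurable f volume := by
    rw [hf]
    apply Measurable.aestronglyMeasurable
    apply Measurable.div
    · exact measurable_const.sub hφc.measurable
    · have hcont : Continuous (fun y : ℝ => |x - y| ^ (1+2*s)) :=
        (Real.continuous_rpow_const (by linarith)).comp (continuous_const.sub continuous_id).abs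
      exact hcont.measurable
  -- dominating function for f
  set E : ℝ → ℝ := fun k => (Set.Ioc (0:ℝ) 1).indicator (fun r => L * r ^ (-(2*s))) k
      + (Set.Ioi (1:ℝ)).indicator (fun r => (M+M) * r ^ (-(1+2*s))) k with hEdef
  have hE : Integrable E := by
    apply Integrable.add
    · rw [integrable_indicator_iff measurableSet_Ioc]
      have h0 : IntegrableOn (fun r : ℝ => r ^ (-(2*s))) (Ioc (0:ℝ) 1) := by
        rw [← intervalIntegrable_iff_integrableOn_Ioc_of_le zero_le_one]
        exact intervalIntegral.intervalIntegrable_rpow' (by linarith)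
      exact h0.const_mul L
    · rw [integrable_indicator_iff measurableSet_Ioi]
      exact (integrableOn_Ioi_rpow_of_lt (by linarith) zero_lt_one).const_mul _
  have hD : Integrable (fun k : ℝ => E |k|) := by
    rw [← integrableOn_univ, ← Set.Iio_union_Ici (a := (0:ℝ))]
    apply IntegrableOn.union
    · have h0 : Integrable (fun k : ℝ => E (0 - k)) := hE.comp_sub_left 0
      simp only [zero_sub] at h0
      exact h0.integrableOn.congr_fun (fun k hk => by rw [abs_of_neg hk]) measurableSet_Iio
    · exact hE.integrableOn.congr_fun (fun k hk => by rw [abs_of_nonneg hk]) measurableSet_Ici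
  have hfD : ∀ y, |f y| ≤ E |x - y| := by
    intro y
    rcases eq_or_ne y x with rfl | hne
    · have hf0 : f y = 0 := by simp [hf]
      have hE0 : E |y - y| = 0 := by
        simp [hEdef]
      rw [hf0, abs_zero, sub_self] at *
      rw [hE0]
    · have hk : x - y ≠ 0 := sub_ne_zero.2 (Ne.symm hne)
      have hkpos : 0 < |x - y| := abs_pos.2 hk
      have hpow : (0:ℝ) < |x - y| ^ (1+2*s) := rpow_pos_of_pos hkpos _
      have hfabs : |f y| = |φ x - φ y| / |x - y| ^ (1+2*s) := by
        simp only [hf]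
        rw [abs_div, abs_of_pos hpow]
      rcases le_or_gt (|x - y|) 1 with hle1 | hgt1
      · have hEv : E |x - y| = L * |x - y| ^ (-(2*s)) := by
          simp only [hEdef]
          rw [Set.indicator_of_mem (show |x - y| ∈ Ioc (0:ℝ) 1 from ⟨hkpos, hle1⟩),
            Set.indicator_of_notMem (by simp only [mem_Ioi, not_lt]; exact hle1), add_zero]
        rw [hfabs, hEv]
        have h1 : |φ x - φ y| ≤ L * |x - y| := hLip x y
        have h2 : L * |x - y| ^ (-(2*s)) = (L * |x - y|) / |x - y| ^ (1+2*s) := by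
          rw [eq_div_iff hpow.ne']
          rw [mul_assoc, ← Real.rpow_add hkpos]
          rw [show -(2*s) + (1+2*s) = 1 by ring, Real.rpow_one]
        rw [h2]
        gcongr
      · have hEv : E |x - y| = (M+M) * |x - y| ^ (-(1+2*s)) := by
          simp only [hEdef]
          rw [Set.indicator_of_notMem (fun h => absurd h.2 (not_le.mpr hgt1)),
            Set.indicator_of_mem (mem_Ioi.2 hgt1), zero_add]
        rw [hfabs, hEv]
        have h1 : |φ x - φ y| ≤ M + M := by
          have hx1 := hbdd x
          have hy1 := hbdd y
          calc |φ x - φ y| = |φ x + -(φ y)| := by rw [sub_eq_add_neg]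
            _ ≤ |φ x| + |-(φ y)| := abs_add_le _ _
            _ = |φ x| + |φ y| := by rw [abs_neg]
            _ ≤ M + M := by linarith
        have h2 : (M+M) * |x - y| ^ (-(1+2*s)) = (M+M) / |x - y| ^ (1+2*s) := by
          rw [Real.rpow_neg (abs_nonneg _), div_eq_mul_inv]
        rw [h2]
        gcongr
  have hfi : Integrable f := by
    apply Integrable.mono' (hD.comp_sub_left x) hfmeas
    filter_upwards with y
    rw [Real.norm_eq_abs]
    exact hfD y
  -- integrability of the lower bound
  have hEqIoc : EqOn H (fun k : ℝ => -((1-θ)/d) * k ^ (-(2*s))) (Ioc 0 d) := by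
    intro k hk
    simp only [hH]
    rw [min_eq_right ((div_le_one hd0).2 hk.2)]
    rw [show -(1+2*s) = -(2*s) + (-1) by ring, Real.rpow_add hk.1, Real.rpow_neg_one]
    have hk0 : k ≠ 0 := ne_of_gt hk.1
    field_simp
  have hEqIoi : EqOn H (fun k : ℝ => -(1-θ) * k ^ (-(1+2*s))) (Ioi d) := by
    intro k hk
    simp only [hH]
    rw [min_eq_left ((one_le_div hd0).2 (le_of_lt hk))]
    ring
  have hHIoc : IntegrableOn H (Ioc 0 d) := by
    have hm : IntegrableOn (fun k : ℝ => k ^ (-(2*s))) (Ioc (0:ℝ) d) := by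
      rw [← intervalIntegrable_iff_integrableOn_Ioc_of_le hd0.le]
      exact intervalIntegral.intervalIntegrable_rpow' (by linarith)
    have hm2 : IntegrableOn (fun k : ℝ => -((1-θ)/d) * k ^ (-(2*s))) (Ioc (0:ℝ) d) :=
      hm.const_mul _
    exact hm2.congr_fun (fun k hk => (hEqIoc hk).symm) measurableSet_Ioc
  have hHIoi : IntegrableOn H (Ioi d) := by
    have hm : IntegrableOn (fun k : ℝ => k ^ (-(1+2*s))) (Ioi d) :=
      integrableOn_Ioi_rpow_of_lt (by linarith) hd0
    have hm2 : IntegrableOn (fun k : ℝ => -(1-θ) * k ^ (-(1+2*s))) (Ioi d) :=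
      hm.const_mul _
    exact hm2.congr_fun (fun k hk => (hEqIoi hk).symm) measurableSet_Ioi
  have hGint : Integrable G := by
    rw [hG]
    rw [integrable_indicator_iff measurableSet_Ioi]
    rw [← Set.Ioc_union_Ioi_eq_Ioi hd0.le]
    exact hHIoc.union hHIoi
  have hgint : Integrable (fun y => G (x - y)) := hGint.comp_sub_left x
  -- comparison of integrals
  have hcomp : (∫ k, G k) ≤ ∫ y, f y := by
    calc (∫ k, G k) = ∫ y, G (x - y) := (integral_sub_left_eq_self G volume x).symm
      _ ≤ ∫ y, f y := integral_mono hgint hfi hfg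
  -- compute the integral of G
  have hIoc_val : (∫ k in Ioc (0:ℝ) d, H k) = -((1-θ)/d) * (d ^ (1-2*s) / (1-2*s)) := by
    rw [setIntegral_congr_fun measurableSet_Ioc hEqIoc]
    rw [MeasureTheory.integral_const_mul]
    rw [← intervalIntegral.integral_of_le hd0.le]
    rw [integral_rpow (Or.inl (by linarith : (-1:ℝ) < -(2*s)))]
    rw [Real.zero_rpow (by intro hcontra; nlinarith : -(2*s)+1 ≠ 0)]
    rw [show -(2*s)+1 = 1-2*s by ring]
    ring
  have hIoi_val : (∫ k in Ioi d, H k) = -((1-θ) * (d ^ (-(2*s)) / (2*s))) := by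
    rw [setIntegral_congr_fun measurableSet_Ioi hEqIoi]
    rw [MeasureTheory.integral_const_mul]
    rw [integral_Ioi_rpow_of_lt (by linarith) hd0]
    rw [show -(1+2*s)+1 = -(2*s) by ring]
    rw [neg_div, div_neg, neg_neg]
    ring
  have hGval : (∫ k, G k)
      = -((1-θ)/d) * (d ^ (1-2*s) / (1-2*s)) + -((1-θ) * (d ^ (-(2*s)) / (2*s))) := by
    rw [hG]
    rw [integral_indicator measurableSet_Ioi]
    rw [← Set.Ioc_union_Ioi_eq_Ioi hd0.le]
    rw [setIntegral_union (Set.Ioc_disjoint_Ioi le_rfl) measurableSet_Ioi hHIoc hHIoi]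
    rw [hIoc_val, hIoi_val]
  -- final arithmetic
  have hdpow : d ^ (1-2*s) = d * d ^ (-(2*s)) := by
    rw [show (1:ℝ)-2*s = 1 + -(2*s) by ring, Real.rpow_add hd0, Real.rpow_one]
  have hKval : cs * (∫ k, G k) = -(cs/(2*s*(1-2*s)) * ((1-θ) * d ^ (-(2*s)))) := by
    rw [hGval, hdpow]
    have hsne : s ≠ 0 := ne_of_gt hs
    have hs1ne : (1:ℝ)-2*s ≠ 0 := by intro hcontra; nlinarith
    have hdne : d ≠ 0 := ne_of_gt hd0
    field_simp
    ring
  have hP : 0 ≤ (1-θ) * d ^ (-(2*s)) := mul_nonneg h1θ (Real.rpow_nonneg hd0.le _)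
  have hfin : cs/(2*s*(1-2*s)) * ((1-θ) * d ^ (-(2*s)))
      ≤ max (cs/(2*s*(1-2*s))) 1 * ((1-θ) * d ^ (-(2*s))) :=
    mul_le_mul_of_nonneg_right (le_max_left _ _) hP
  have hcsint : cs * (∫ k, G k) ≤ cs * ∫ y, f y := mul_le_mul_of_nonneg_left hcomp hc.le
  have hgoal_eq : -(max (cs/(2*s*(1-2*s))) 1) * (1-θ) * d ^ (-(2*s))
      = -(max (cs/(2*s*(1-2*s))) 1 * ((1-θ) * d ^ (-(2*s)))) := by ring
  rw [hgoal_eq]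
  linarith [hcsint, hfin, hKval]
end

section
/- Let β > ν > 0, a ∈ (0,1], b ≥ 1, and g(l) := (a l^β − b)^{−1/ν} for l > (b/a)^{1/β}. If β/ν ≥ d − 2 for an integer d ≥ 1, then for all l > (b/a)^{1/β} one has g''(l) + ((d−1)/l) g'(l) ≥ 0; i.e., the radial function y ↦ g(|y|) is subharmonic on the region |y| > (b/a)^{1/β} in ℝ^d. -/
theorem stmt6 (d : ℕ) (hd : 1 ≤ d) (β ν a b : ℝ) (hν : 0 < ν) (hβν : ν < β)
    (ha : 0 < a) (ha1 : a ≤ 1) (hb : 1 ≤ b) (hdim : (d:ℝ) - 2 ≤ β / ν)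
    (g : ℝ → ℝ)
    (hg : ∀ l, (b/a) ^ (1/β) < l → g l = (a * l ^ β - b) ^ (-(1/ν))) :
    ∀ l, (b/a) ^ (1/β) < l →
      0 ≤ deriv (deriv g) l + ((d:ℝ)-1)/l * deriv g l := by
  have hβ : 0 < β := lt_trans hν hβν
  set c : ℝ := -(1/ν) with hc
  set L : ℝ := (b/a) ^ (1/β) with hL
  have hba : 1 ≤ b / a := (le_div_iff₀ ha).mpr (by linarith)
  have hL1 : 1 ≤ L := Real.one_le_rpow hba (by positivity)
  -- basic facts on the region
  have hpos : ∀ x : ℝ, L < x → 0 < x ∧ 0 < a * x ^ β - b := by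
    intro x hx
    have hx0 : 0 < x := lt_of_lt_of_le (by linarith) (le_of_lt hx)
    have hLx : L ^ β < x ^ β :=
      Real.rpow_lt_rpow (by positivity) hx hβ
    have hLβ : L ^ β = b / a := by
      rw [hL, one_div, Real.rpow_inv_rpow (by positivity) (ne_of_gt hβ)]
    have : b / a < x ^ β := by rw [← hLβ]; exact hLx
    have : b < a * x ^ β := by
      have := (div_lt_iff₀ ha).mp this
      linarith [this]
    exact ⟨hx0, by linarith⟩
  set f1 : ℝ → ℝ := fun x => (a * x ^ β - b) ^ c with hf1def
  set f2 : ℝ → ℝ := fun x => a * (β * x ^ (β-1)) * c * (a * x ^ β - b) ^ (c-1)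
    with hf2def
  have hu : ∀ x : ℝ, L < x →
      HasDerivAt (fun y => a * y ^ β - b) (a * (β * x ^ (β-1))) x := by
    intro x hx
    exact ((Real.hasDerivAt_rpow_const (Or.inl (hpos x hx).1.ne')).const_mul a).sub_const b
  have hd1 : ∀ x : ℝ, L < x → HasDerivAt f1 (f2 x) x := by
    intro x hx
    exact (hu x hx).rpow_const (Or.inl (hpos x hx).2.ne')
  have hS : IsOpen {x : ℝ | L < x} := isOpen_lt continuous_const continuous_id
  have hdg : ∀ x : ℝ, L < x → deriv g x = f2 x := by
    intro x hx
    have hev : g =ᶠ[nhds x] f1 :=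
      Filter.eventuallyEq_of_mem (hS.mem_nhds hx) (fun y hy => hg y hy)
    rw [hev.deriv_eq]
    exact (hd1 x hx).deriv
  intro l hl
  obtain ⟨hl0, hU⟩ := hpos l hl
  set U : ℝ := a * l ^ β - b with hUdef
  -- second derivative of f2 at l
  have hF : HasDerivAt (fun y => (a * y ^ β - b) ^ (c-1))
      (a * (β * l ^ (β-1)) * (c-1) * U ^ (c-1-1)) l :=
    (hu l hl).rpow_const (Or.inl hU.ne')
  have hG : HasDerivAt (fun y => a * (β * y ^ (β-1)) * c)
      (a * (β * ((β-1) * l ^ (β-1-1))) * c) l := by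
    exact (((Real.hasDerivAt_rpow_const (Or.inl hl0.ne')).const_mul β).const_mul a).mul_const c
  have hd2 : HasDerivAt f2
      (a * (β * ((β-1) * l ^ (β-1-1))) * c * U ^ (c-1)
        + a * (β * l ^ (β-1)) * c * (a * (β * l ^ (β-1)) * (c-1) * U ^ (c-1-1))) l := by
    have := hG.mul hF
    convert this using 1 <;> rfl
  have hderiv2 : deriv (deriv g) l
      = a * (β * ((β-1) * l ^ (β-1-1))) * c * U ^ (c-1)
        + a * (β * l ^ (β-1)) * c * (a * (β * l ^ (β-1)) * (c-1) * U ^ (c-1-1)) := by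
    have hev : deriv g =ᶠ[nhds l] f2 :=
      Filter.eventuallyEq_of_mem (hS.mem_nhds hl) (fun y hy => hdg y hy)
    rw [hev.deriv_eq]
    exact hd2.deriv
  rw [hderiv2, hdg l hl]
  -- now pure algebra/inequality
  have hq : (0:ℝ) < l ^ (β-2) := Real.rpow_pos_of_pos hl0 _
  have hw : (0:ℝ) < U ^ (c-2) := Real.rpow_pos_of_pos hU _
  have e1 : U ^ (c-1-1) = U ^ (c-2) := by rw [show c-1-1 = c-2 by ring]
  have e2 : l ^ (β-1-1) = l ^ (β-2) := by rw [show β-1-1 = β-2 by ring]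
  have e3 : U ^ (c-1) = U ^ (c-2) * U := by
    rw [show c-1 = c-2+1 by ring, Real.rpow_add hU, Real.rpow_one]
  have e4 : l ^ (β-1) = l ^ (β-2) * l := by
    rw [show β-1 = β-2+1 by ring, Real.rpow_add hl0, Real.rpow_one]
  have e5 : l ^ β = l ^ (β-2) * (l * l) := by
    rw [show β = β-2+1+1 by ring]
    rw [Real.rpow_add hl0, Real.rpow_add hl0, Real.rpow_one]
    ring_nf
  have hm : 0 < 1/ν := by positivity
  set m : ℝ := 1/ν with hm'
  set q : ℝ := l ^ (β-2) with hq'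
  set w : ℝ := U ^ (c-2) with hw'
  have hX : 0 < a * (q * (l*l)) := by positivity
  have hbr : 0 ≤ (m+1)*β*(a*(q*(l*l))) - U*(β+(d:ℝ)-2) := by
    have hUle : U ≤ a * (q*(l*l)) := by
      have h5 : a * l ^ β = a * (q*(l*l)) := by rw [e5]
      rw [hUdef]; linarith
    have hmb : (d:ℝ) - 2 ≤ m * β := by
      have hh : β / ν = m * β := by rw [hm']; ring
      linarith
    rcases le_or_gt 0 (β+(d:ℝ)-2) with h2 | h2
    · have h3 : U*(β+(d:ℝ)-2) ≤ (a*(q*(l*l)))*(β+(d:ℝ)-2) :=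
        mul_le_mul_of_nonneg_right hUle h2
      have h5 : β+(d:ℝ)-2 ≤ (m+1)*β := by nlinarith
      have h4 : (a*(q*(l*l)))*(β+(d:ℝ)-2) ≤ (a*(q*(l*l)))*((m+1)*β) :=
        mul_le_mul_of_nonneg_left h5 hX.le
      have h6 : (a*(q*(l*l)))*((m+1)*β) = (m+1)*β*(a*(q*(l*l))) := by ring
      linarith
    · have h3 : U*(β+(d:ℝ)-2) < 0 := mul_neg_of_pos_of_neg hU (by linarith)
      have h4 : 0 < (m+1)*β*(a*(q*(l*l))) := by positivity
      linarith
  have key : 0 ≤ (a*β*m*w*q) * ((m+1)*β*(a*(q*(l*l))) - U*(β+(d:ℝ)-2)) :=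
    mul_nonneg (by positivity) hbr
  have heq : a * (β * ((β-1) * l ^ (β-1-1))) * c * U ^ (c-1)
        + a * (β * l ^ (β-1)) * c * (a * (β * l ^ (β-1)) * (c-1) * U ^ (c-1-1))
        + ((d:ℝ)-1)/l * (a * (β * l ^ (β-1)) * c * U ^ (c-1))
      = (a*β*m*w*q) * ((m+1)*β*(a*(q*(l*l))) - U*(β+(d:ℝ)-2)) := by
    rw [e1, e2, e3, e4, hc]
    field_simp
    ring
  rw [heq]
  exact key
end

section
/- Let d ≥ 1, s ∈ (0,1), and let u: ℝ^d → ℝ be bounded with |u| ≤ M, and assume that for all unit vectors e and all x, the second difference satisfies 2u(x) − u(x+h) − u(x−h) ≤ (C+1)ρ|h|² for |h| ≤ ρ^{−1/2}, where ρ ∈ (0,1]. Then for every x, the quantity c_{s,d}/2 · ∫_{|h|≤ρ^{−1/2}} (2u(x)−u(x+h)−u(x−h))/|h|^{d+2s} dh + c_{s,d} ∫_{|h|>ρ^{−1/2}} (u(x)−u(x+h))/|h|^{d+2s} dh is at most (c_{s,d} ω_d (C+1)/(2s(1−s))) · ρ^s, where ω_d is the surface area of the unit sphere and M ≤ 1.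 -/
open MeasureTheory
open scoped ENNReal NNReal

open Set Metric in
lemma my_lintegral_fun_norm_addHaar {E : Type*} [NormedAddCommGroup E] [NormedSpace ℝ E]
    [MeasurableSpace E] [BorelSpace E] [Nontrivial E] [FiniteDimensional ℝ E]
    (μ : Measure E) [μ.IsAddHaarMeasure] (f : ℝ → ℝ≥0∞) (hf : Measurable f) :
    ∫⁻ x, f ‖x‖ ∂μ = μ.toSphere univ *
      ∫⁻ y in Ioi (0:ℝ), ENNReal.ofReal (y ^ (Module.finrank ℝ E - 1)) * f y := by
  calc ∫⁻ x, f ‖x‖ ∂μ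
      = ∫⁻ x in ({(0:E)}ᶜ : Set E), f ‖x‖ ∂μ := by
        rw [restrict_compl_singleton]
    _ = ∫⁻ x : ({(0:E)}ᶜ : Set E), f ‖(x : E)‖ ∂(μ.comap Subtype.val) :=
        (lintegral_subtype_comap (measurableSet_singleton _).compl _).symm
    _ = ∫⁻ p : sphere (0:E) 1 × Ioi (0:ℝ), f p.2
          ∂(μ.toSphere.prod (.volumeIoiPow (Module.finrank ℝ E - 1))) := by
        rw [← μ.measurePreserving_homeomorphUnitSphereProd.lintegral_comp_emb
          (Homeomorph.measurableEmbedding _) (fun p => f p.2)]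
        simp [homeomorphUnitSphereProd_apply_snd_coe]
    _ = μ.toSphere univ *
          ∫⁻ y : Ioi (0:ℝ), f y ∂(Measure.volumeIoiPow (Module.finrank ℝ E - 1)) := by
        rw [lintegral_prod _ ((show Measurable fun p : sphere (0:E) 1 × Ioi (0:ℝ) => f ↑p.2 from
          hf.comp (measurable_subtype_coe.comp measurable_snd)).aemeasurable)]
        simp [lintegral_const, mul_comm]
    _ = _ := by
        rw [Measure.volumeIoiPow,
          lintegral_withDensity_eq_lintegral_mul _
            ((measurable_subtype_coe.pow_const _).ennreal_ofReal)
            (show Measurable fun y : Ioi (0:ℝ) => f ↑y from hf.comp measurable_subtype_coe)]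
        rw [← lintegral_subtype_comap measurableSet_Ioi
          (fun y => ENNReal.ofReal (y ^ (Module.finrank ℝ E - 1)) * f y)]
        rfl

lemma my_ofReal_integral_le {α : Type*} [MeasurableSpace α] {μ : Measure α} {f : α → ℝ}
    (hf : Integrable f μ) :
    ENNReal.ofReal (∫ x, f x ∂μ) ≤ ∫⁻ x, ENNReal.ofReal (f x) ∂μ := by
  have h1 : ∫ x, f x ∂μ ≤ ∫ x, max (f x) 0 ∂μ :=
    integral_mono hf hf.pos_part (fun x => le_max_left _ _)
  have h2 : ENNReal.ofReal (∫ x, max (f x) 0 ∂μ) = ∫⁻ x, ENNReal.ofReal (f x) ∂μ := by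
    rw [ofReal_integral_eq_lintegral_ofReal hf.pos_part
      (Filter.Eventually.of_forall fun x => le_max_right _ _)]
    congr 1
    funext x
    rcases le_total 0 (f x) with h | h
    · rw [max_eq_left h]
    · rw [max_eq_right h, ENNReal.ofReal_zero, ENNReal.ofReal_eq_zero.2 h]
  exact h2 ▸ ENNReal.ofReal_le_ofReal h1

open Set Metric in
lemma my_key (d : ℕ) (hd : 1 ≤ d) (f : EuclideanSpace ℝ (Fin d) → ℝ) (g : ℝ → ℝ)
    (T : Set ℝ) (hT : MeasurableSet T) (hg : Measurable g)
    (hfg : ∀ h : EuclideanSpace ℝ (Fin d), ‖h‖ ∈ T → f h ≤ g ‖h‖) (V : ℝ) (hV : 0 ≤ V)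
    (hval : ∫⁻ y in T ∩ Ioi (0:ℝ), ENNReal.ofReal (y ^ (d - 1)) * ENNReal.ofReal (g y)
      = ENNReal.ofReal V) :
    ∫ h in {h : EuclideanSpace ℝ (Fin d) | ‖h‖ ∈ T}, f h
      ≤ (d * (volume (ball (0 : EuclideanSpace ℝ (Fin d)) 1)).toReal) * V := by
  haveI : Nonempty (Fin d) := Fin.pos_iff_nonempty.mp hd
  haveI : Nontrivial (EuclideanSpace ℝ (Fin d)) := by
    refine nontrivial_of_ne (EuclideanSpace.single (⟨0, hd⟩ : Fin d) (1:ℝ)) 0 ?_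
    intro h
    simpa [EuclideanSpace.single_apply] using congrArg (fun v => v (⟨0, hd⟩ : Fin d)) h
  set κ : ℝ := (volume (ball (0 : EuclideanSpace ℝ (Fin d)) 1)).toReal with hκ
  have hκ0 : 0 ≤ κ := ENNReal.toReal_nonneg
  have hS : MeasurableSet {h : EuclideanSpace ℝ (Fin d) | ‖h‖ ∈ T} := hT.preimage measurable_norm
  by_cases hInt : IntegrableOn f {h : EuclideanSpace ℝ (Fin d) | ‖h‖ ∈ T} volume
  · -- integrable case
    have hfin : volume (ball (0:EuclideanSpace ℝ (Fin d)) 1) ≠ ⊤ := measure_ball_lt_top.ne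
    have chain : ENNReal.ofReal (∫ h in {h : EuclideanSpace ℝ (Fin d) | ‖h‖ ∈ T}, f h)
        ≤ ENNReal.ofReal ((d * κ) * V) := by
      calc ENNReal.ofReal (∫ h in {h : EuclideanSpace ℝ (Fin d) | ‖h‖ ∈ T}, f h)
          ≤ ∫⁻ h in {h : EuclideanSpace ℝ (Fin d) | ‖h‖ ∈ T}, ENNReal.ofReal (f h) := my_ofReal_integral_le hInt
        _ ≤ ∫⁻ h in {h : EuclideanSpace ℝ (Fin d) | ‖h‖ ∈ T},
              (T.indicator (fun y => ENNReal.ofReal (g y))) ‖h‖ := by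
            refine setLIntegral_mono ((hg.ennreal_ofReal.indicator hT).comp measurable_norm) ?_
            intro h hh
            rw [Set.indicator_of_mem (show ‖h‖ ∈ T from hh)]
            exact ENNReal.ofReal_le_ofReal (hfg h hh)
        _ ≤ ∫⁻ h, (T.indicator (fun y => ENNReal.ofReal (g y))) ‖h‖ :=
            setLIntegral_le_lintegral _ _
        _ = (volume : Measure (EuclideanSpace ℝ (Fin d))).toSphere univ *
              ∫⁻ y in Ioi (0:ℝ), ENNReal.ofReal (y ^ (Module.finrank ℝ (EuclideanSpace ℝ (Fin d)) - 1)) *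
                (T.indicator (fun y => ENNReal.ofReal (g y))) y :=
            my_lintegral_fun_norm_addHaar volume _ (hg.ennreal_ofReal.indicator hT)
        _ = ENNReal.ofReal ((d * κ) * V) := by
            have hdim : Module.finrank ℝ (EuclideanSpace ℝ (Fin d)) = d := by
              simp [finrank_euclideanSpace]
            rw [hdim, Measure.toSphere_apply_univ, hdim]
            have hind : ∀ y : ℝ, ENNReal.ofReal (y ^ (d - 1)) *
                (T.indicator (fun y => ENNReal.ofReal (g y))) y
                = T.indicator (fun y => ENNReal.ofReal (y ^ (d - 1)) * ENNReal.ofReal (g y)) y := by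
              intro y
              by_cases hy : y ∈ T <;> simp [hy]
            rw [lintegral_congr hind, lintegral_indicator hT _, Measure.restrict_restrict hT, hval]
            rw [← ENNReal.ofReal_toReal hfin, ← hκ]
            rw [← ENNReal.ofReal_natCast d, ← ENNReal.ofReal_mul (by positivity),
              ← ENNReal.ofReal_mul (by positivity)]
    exact (ENNReal.ofReal_le_ofReal_iff (by positivity)).mp chain
  · rw [integral_undef hInt]
    positivity

set_option maxHeartbeats 1000000 in
theorem stmt7 (d : ℕ) (hd : 1 ≤ d) (s ρ C csd ωd : ℝ)
    (hs : 0 < s) (hs1 : s < 1) (hρ : 0 < ρ) (hρ1 : ρ ≤ 1) (hC : 0 ≤ C) (hc : 0 < csd)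
    (hω : ωd = d * (volume (Metric.ball (0 : EuclideanSpace ℝ (Fin d)) 1)).toReal)
    (u : EuclideanSpace ℝ (Fin d) → ℝ)
    (hu0 : ∀ x, 0 ≤ u x) (hu1 : ∀ x, u x ≤ 1)
    (hsecond : ∀ (x h : EuclideanSpace ℝ (Fin d)), ‖h‖ ≤ ρ ^ (-(1/2) : ℝ) →
      2 * u x - u (x + h) - u (x - h) ≤ (C+1) * ρ * ‖h‖^2) :
    ∀ x : EuclideanSpace ℝ (Fin d),
      csd/2 * (∫ h in {h : EuclideanSpace ℝ (Fin d) | ‖h‖ ≤ ρ ^ (-(1/2):ℝ)},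
          (2*u x - u (x+h) - u (x-h)) / ‖h‖ ^ ((d:ℝ)+2*s))
      + csd * (∫ h in {h : EuclideanSpace ℝ (Fin d) | ρ ^ (-(1/2):ℝ) < ‖h‖},
          (u x - u (x+h)) / ‖h‖ ^ ((d:ℝ)+2*s))
      ≤ csd * ωd * (C+1) / (2*s*(1-s)) * ρ ^ s := by
  intro x
  set R : ℝ := ρ ^ (-(1/2):ℝ) with hR
  set κ : ℝ := (volume (Metric.ball (0 : EuclideanSpace ℝ (Fin d)) 1)).toReal with hκ
  have hκ0 : 0 ≤ κ := ENNReal.toReal_nonneg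
  have hR0 : 0 < R := Real.rpow_pos_of_pos hρ _
  have hq : (0:ℝ) < (d:ℝ) + 2*s := by
    have : (0:ℝ) ≤ d := Nat.cast_nonneg d
    linarith
  have h22 : (0:ℝ) < 2 - 2*s := by linarith
  have h2s : (0:ℝ) < 2*s := by linarith
  have hRpow1 : R ^ (2-2*s) = ρ ^ (s-1) := by
    rw [hR, ← Real.rpow_mul hρ.le, show (-(1/2):ℝ)*(2-2*s) = s-1 by ring]
  have hRpow2 : R ^ (-(2*s)) = ρ ^ s := by
    rw [hR, ← Real.rpow_mul hρ.le, show (-(1/2):ℝ)*(-(2*s)) = s by ring]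
  have hρs : ρ * ρ ^ (s-1) = ρ ^ s := by
    have h := Real.rpow_add hρ 1 (s-1)
    rw [Real.rpow_one] at h
    rw [show (1+(s-1):ℝ) = s by ring] at h
    exact h.symm
  have hρspos : (0:ℝ) ≤ ρ ^ s := Real.rpow_nonneg hρ.le s
  -- first piece
  have hval₁ : ∫⁻ y in Set.Iic R ∩ Set.Ioi (0:ℝ),
      ENNReal.ofReal (y ^ (d - 1)) * ENNReal.ofReal ((C+1)*ρ*(y^2 / y^((d:ℝ)+2*s)))
      = ENNReal.ofReal ((C+1)*ρ*(R^(2-2*s)/(2-2*s))) := by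
    rw [Set.inter_comm, Set.Ioi_inter_Iic]
    have hcong : ∀ y ∈ Set.Ioc (0:ℝ) R,
        ENNReal.ofReal (y ^ (d - 1)) * ENNReal.ofReal ((C+1)*ρ*(y^2 / y^((d:ℝ)+2*s)))
        = ENNReal.ofReal ((C+1)*ρ * y ^ (1-2*s)) := by
      intro y hy
      have hy0 : 0 < y := hy.1
      rw [← ENNReal.ofReal_mul (by positivity)]
      congr 1
      have e1 : y^(d-1) = y ^ ((d:ℝ)-1) := by
        rw [← Real.rpow_natCast y (d-1), Nat.cast_sub hd, Nat.cast_one]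
      have e2 : y^2 = y ^ (2:ℝ) := by
        rw [← Real.rpow_natCast y 2]; norm_num
      rw [e1, e2]
      have e3 : y ^ ((d:ℝ)-1) * ((C+1)*ρ*(y^(2:ℝ) / y^((d:ℝ)+2*s)))
          = (C+1)*ρ * (y ^ ((d:ℝ)-1) * y^(2:ℝ) / y^((d:ℝ)+2*s)) := by ring
      rw [e3, ← Real.rpow_add hy0, ← Real.rpow_sub hy0,
        show ((d:ℝ)-1+2-((d:ℝ)+2*s) : ℝ) = 1-2*s by ring]
    rw [setLIntegral_congr_fun measurableSet_Ioc hcong]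
    have hInt : IntegrableOn (fun y : ℝ => (C+1)*ρ * y ^ (1-2*s)) (Set.Ioc 0 R) volume := by
      exact ((intervalIntegral.intervalIntegrable_rpow' (by linarith)).1).const_mul _
    rw [← ofReal_integral_eq_lintegral_ofReal hInt ?_]
    · congr 1
      rw [MeasureTheory.integral_const_mul]
      congr 1
      rw [← intervalIntegral.integral_of_le hR0.le,
        integral_rpow (Or.inl (by linarith : (-1:ℝ) < 1-2*s)),
        show (1-2*s+1:ℝ) = 2-2*s by ring, Real.zero_rpow (by linarith), sub_zero]
    · refine (ae_restrict_iff' measurableSet_Ioc).2 (Filter.Eventually.of_forall ?_)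
      intro y hy
      exact mul_nonneg (by positivity) (Real.rpow_nonneg hy.1.le _)
  -- second piece
  have hval₂ : ∫⁻ y in Set.Ioi R ∩ Set.Ioi (0:ℝ),
      ENNReal.ofReal (y ^ (d - 1)) * ENNReal.ofReal (1 / y^((d:ℝ)+2*s))
      = ENNReal.ofReal (R^(-(2*s))/(2*s)) := by
    rw [Set.inter_eq_self_of_subset_left (Set.Ioi_subset_Ioi hR0.le)]
    have hcong : ∀ y ∈ Set.Ioi R,
        ENNReal.ofReal (y ^ (d-1)) * ENNReal.ofReal (1 / y^((d:ℝ)+2*s))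
        = ENNReal.ofReal (y ^ (-1-2*s)) := by
      intro y hy
      have hy0 : 0 < y := lt_trans hR0 hy
      rw [← ENNReal.ofReal_mul (by positivity)]
      congr 1
      have e1 : y^(d-1) = y ^ ((d:ℝ)-1) := by
        rw [← Real.rpow_natCast y (d-1), Nat.cast_sub hd, Nat.cast_one]
      rw [e1, show y ^ ((d:ℝ)-1) * (1 / y^((d:ℝ)+2*s)) = y ^ ((d:ℝ)-1) / y^((d:ℝ)+2*s) by ring,
        ← Real.rpow_sub hy0, show ((d:ℝ)-1-((d:ℝ)+2*s) : ℝ) = -1-2*s by ring]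
    rw [setLIntegral_congr_fun measurableSet_Ioi hcong]
    have hInt : IntegrableOn (fun y : ℝ => y ^ (-1-2*s)) (Set.Ioi R) volume :=
      integrableOn_Ioi_rpow_of_lt (by linarith) hR0
    rw [← ofReal_integral_eq_lintegral_ofReal hInt ?_]
    · congr 1
      rw [integral_Ioi_rpow_of_lt (by linarith) hR0,
        show (-1-2*s+1:ℝ) = -(2*s) by ring, neg_div_neg_eq]
    · refine (ae_restrict_iff' measurableSet_Ioi).2 (Filter.Eventually.of_forall ?_)
      intro y hy
      exact Real.rpow_nonneg (le_of_lt (lt_trans hR0 hy)) _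
  -- apply key lemma to both pieces
  have h₁ : ∫ h in {h : EuclideanSpace ℝ (Fin d) | ‖h‖ ≤ R},
      (2*u x - u (x+h) - u (x-h)) / ‖h‖ ^ ((d:ℝ)+2*s) ≤ ((d:ℝ) * κ) * ((C+1)*ρ*(R^(2-2*s)/(2-2*s))) := by
    refine my_key d hd _ (fun y => (C+1)*ρ*(y^2 / y^((d:ℝ)+2*s))) (Set.Iic R) measurableSet_Iic
      (by fun_prop) ?_ _ ?_ hval₁
    · intro h hh
      rcases eq_or_lt_of_le (norm_nonneg h) with h0 | h0
      · simp [← h0, Real.zero_rpow (ne_of_gt hq)]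
      · have hD : 0 < ‖h‖ ^ ((d:ℝ)+2*s) := Real.rpow_pos_of_pos h0 _
        show _ ≤ (C+1)*ρ*(‖h‖^2 / ‖h‖^((d:ℝ)+2*s))
        rw [show (C+1)*ρ*(‖h‖^2 / ‖h‖^((d:ℝ)+2*s)) = ((C+1)*ρ*‖h‖^2) / ‖h‖^((d:ℝ)+2*s) by ring]
        exact (div_le_div_iff_of_pos_right hD).mpr (hsecond x h hh)
    · exact mul_nonneg (by positivity) (div_nonneg (Real.rpow_nonneg hR0.le _) h22.le)
  have h₂ : ∫ h in {h : EuclideanSpace ℝ (Fin d) | R < ‖h‖},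
      (u x - u (x+h)) / ‖h‖ ^ ((d:ℝ)+2*s) ≤ ((d:ℝ) * κ) * (R^(-(2*s))/(2*s)) := by
    refine my_key d hd _ (fun y => 1 / y^((d:ℝ)+2*s)) (Set.Ioi R) measurableSet_Ioi
      (by fun_prop) ?_ _ ?_ hval₂
    · intro h hh
      have h0 : 0 < ‖h‖ := lt_trans hR0 hh
      have hD : 0 < ‖h‖ ^ ((d:ℝ)+2*s) := Real.rpow_pos_of_pos h0 _
      show _ ≤ 1 / ‖h‖^((d:ℝ)+2*s)
      exact (div_le_div_iff_of_pos_right hD).mpr (by linarith [hu1 x, hu0 (x+h)])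
    · exact div_nonneg (Real.rpow_nonneg hR0.le _) h2s.le
  -- combine
  have hcoef : (C+1)/(2*(2-2*s)) + 1/(2*s) ≤ (C+1)/(2*s*(1-s)) := by
    rw [div_add_div _ _ (by positivity) (by positivity),
      div_le_div_iff₀ (by positivity) (mul_pos h2s (by linarith))]
    nlinarith [mul_nonneg (mul_nonneg hs.le (by linarith : (0:ℝ) ≤ 1-s))
      (by nlinarith : (0:ℝ) ≤ C*(2-s)+s)]
  calc csd/2 * (∫ h in {h : EuclideanSpace ℝ (Fin d) | ‖h‖ ≤ R},
          (2*u x - u (x+h) - u (x-h)) / ‖h‖ ^ ((d:ℝ)+2*s))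
      + csd * (∫ h in {h : EuclideanSpace ℝ (Fin d) | R < ‖h‖},
          (u x - u (x+h)) / ‖h‖ ^ ((d:ℝ)+2*s))
      ≤ csd/2 * (((d:ℝ) * κ) * ((C+1)*ρ*(R^(2-2*s)/(2-2*s))))
        + csd * (((d:ℝ) * κ) * (R^(-(2*s))/(2*s))) :=
        add_le_add (mul_le_mul_of_nonneg_left h₁ (by linarith))
          (mul_le_mul_of_nonneg_left h₂ hc.le)
    _ = (csd*((d:ℝ)*κ)) * ((C+1)*(ρ*R^(2-2*s))/(2*(2-2*s)) + R^(-(2*s))/(2*s)) := by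
        have e1 : (2-2*s) ≠ 0 := h22.ne'
        have e2 : s ≠ 0 := hs.ne'
        field_simp
    _ = (csd*((d:ℝ)*κ)*ρ^s) * ((C+1)/(2*(2-2*s)) + 1/(2*s)) := by
        rw [hRpow1, hρs, hRpow2]; ring
    _ ≤ (csd*((d:ℝ)*κ)*ρ^s) * ((C+1)/(2*s*(1-s))) := by
        refine mul_le_mul_of_nonneg_left hcoef ?_
        have : (0:ℝ) ≤ (d:ℝ) := Nat.cast_nonneg d
        positivity
    _ = csd * ωd * (C+1) / (2*s*(1-s)) * ρ ^ s := by rw [hω]; ring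
end

section
/- Let 0 < s < 1/2, k a positive integer, and T_k := 2^{(2s)^{−k}}. If 1 ≤ t ≤ T_k and β_k^k := 2^{−Σ_{j=1}^{k} j (2s)^{j−1}}, then l_k^k(t) := Σ_{j=0}^{k} β_j^k t^{1/(2s) − (2s)^j} satisfies l_k^k(t) ≥ 2^{−1/(1−2s)² − 1} t^{1/(2s)}. -/
theorem stmt10 (s : ℝ) (hs : 0 < s) (hs2 : s < 1/2) (k : ℕ) (hk : 1 ≤ k)
    (α β : ℕ → ℝ)
    (hα : ∀ n ≤ k, α n = ∑ j ∈ Finset.range n, ((k : ℝ) - n + (j + 1)) * (2*s)^j)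
    (hβ : ∀ n ≤ k, β n = (2:ℝ) ^ (-(α n)))
    (t : ℝ) (ht1 : 1 ≤ t) (ht2 : t ≤ (2:ℝ) ^ ((2*s) ^ (-(k:ℝ)))) :
    (2:ℝ) ^ (-(1/(1-2*s)^2) - 1) * t ^ (1/(2*s)) ≤
      ∑ j ∈ Finset.range (k+1), β j * t ^ (1/(2*s) - (2*s)^j) := by
  set x := 2*s with hx
  have hx0 : 0 < x := by positivity
  have hx1 : x < 1 := by rw [hx]; linarith
  have ht0 : (0:ℝ) < t := lt_of_lt_of_le one_pos ht1
  -- α k = ∑ (j+1) x^j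
  have hαk : α k = ∑ j ∈ Finset.range k, ((j:ℝ) + 1) * x^j := by
    rw [hα k le_rfl]
    apply Finset.sum_congr rfl
    intro j _
    ring_nf
  -- bound α k ≤ 1/(1-x)^2
  have hsum : HasSum (fun n : ℕ => ((n:ℝ) + 1) * x^n) (1/(1-x)^2) := by
    have h1 : HasSum (fun n : ℕ => (n:ℝ) * x^n) (x / (1-x)^2) :=
      hasSum_coe_mul_geometric_of_norm_lt_one (by rw [Real.norm_eq_abs, abs_of_pos hx0]; exact hx1)
    have h2 : HasSum (fun n : ℕ => x^n) ((1-x)⁻¹) :=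
      hasSum_geometric_of_lt_one hx0.le hx1
    have := h1.add h2
    have heq : x / (1-x)^2 + (1-x)⁻¹ = 1/(1-x)^2 := by
      have h1x : (1:ℝ) - x ≠ 0 := by intro h; nlinarith
      field_simp
      ring
    rw [heq] at this
    convert this using 2 with n
    ring
  have hαle : α k ≤ 1/(1-x)^2 := by
    rw [hαk]
    exact sum_le_hasSum _ (fun i _ => by positivity) hsum
  -- t^(x^k) ≤ 2
  have htk : t ^ (x^k : ℝ) ≤ 2 := by
    have hxk : (0:ℝ) < x^k := by positivity
    calc t ^ (x^k : ℝ) ≤ ((2:ℝ) ^ (x ^ (-(k:ℝ)))) ^ (x^k : ℝ) := by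
          apply Real.rpow_le_rpow ht0.le ht2 hxk.le
      _ = 2 := by
          rw [← Real.rpow_natCast x k, ← Real.rpow_mul (by norm_num : (0:ℝ) ≤ 2),
            Real.rpow_neg hx0.le,
            inv_mul_cancel₀ (ne_of_gt (Real.rpow_pos_of_pos hx0 _)), Real.rpow_one]
  -- β k ≥ 2^(-1/(1-x)^2)
  have hβk : (2:ℝ) ^ (-(1/(1-x)^2)) ≤ β k := by
    rw [hβ k le_rfl]
    apply Real.rpow_le_rpow_left_iff (by norm_num : (1:ℝ) < 2) |>.mpr
    linarith
  -- single term bound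
  have hterm : (2:ℝ) ^ (-(1/(1-x)^2) - 1) * t ^ (1/x) ≤ β k * t ^ (1/x - x^k) := by
    have h1 : t ^ (1/x - (x^k : ℝ)) = t ^ (1/x) / t ^ (x^k : ℝ) :=
      Real.rpow_sub ht0 _ _
    have htkpos : (0:ℝ) < t ^ (x^k : ℝ) := Real.rpow_pos_of_pos ht0 _
    have h2 : t ^ (1/x) / 2 ≤ t ^ (1/x - (x^k : ℝ)) := by
      rw [h1]
      apply div_le_div_of_nonneg_left (Real.rpow_nonneg ht0.le _) htkpos htk
    calc (2:ℝ) ^ (-(1/(1-x)^2) - 1) * t ^ (1/x)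
        = (2:ℝ) ^ (-(1/(1-x)^2)) * (t ^ (1/x) / 2) := by
          rw [Real.rpow_sub (by norm_num : (0:ℝ) < 2), Real.rpow_one]; ring
      _ ≤ β k * t ^ (1/x - x^k) := by
          apply mul_le_mul hβk h2 (by positivity)
          linarith [Real.rpow_pos_of_pos (by norm_num : (0:ℝ) < 2) (-(1/(1-x)^2))]
  refine hterm.trans ?_
  apply Finset.single_le_sum (f := fun j => β j * t ^ (1/x - x^j))
  · intro i hi
    rw [hβ i (Nat.lt_succ_iff.mp (Finset.mem_range.mp hi))]
    positivity
  · exact Finset.self_mem_range_succ k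
end
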